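/- Let B₁ = B(c₁, r₁), B₂ = B(c₂, r₂) be disjoint disks in ℝ², and p₁ ∈ B₁, p₂ ∈ B₂ with R₁(p₂) = p₁ and R₂(p₁) = p₂ (R_j the inversion across ∂B_j). Then for every x ∈ ∂B₁, ⟨(x − p₁)^⊥/|x − p₁|² − (x − p₂)^⊥/|x − p₂|² − (x − c₁)^⊥/|x − c₁|², x − c₁⟩ = 0, where (y₁,y₂)^⊥ = (−y₂, y₁). Equivalently, the normal derivative on ∂B₁ of any continuous branch of arg(x − p₁) − arg(x − p₂) − arg(x − c₁) vanishes. -/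

import Mathlib

open Real Filter Metric

noncomputable section

abbrev E2 := EuclideanSpace ℝ (Fin 2)

/-- The point (a, b) in ℝ². -/
def pt (a b : ℝ) : E2 := (WithLp.equiv 2 (Fin 2 → ℝ)).symm ![a, b]

/-- Inversion (reflection) across the circle ∂B(c, r). -/
def refl2 (c : E2) (r : ℝ) (x : E2) : E2 := (r ^ 2 / ‖x - c‖ ^ 2) • (x - c) + c
/-- Rotation by π/2 : (y₁, y₂)^⊥ = (−y₂, y₁). -/
def perp (x : E2) : E2 := pt (-(x 1)) (x 0)

lemma inner_eq' (y z : E2) : (inner ℝ y z : ℝ) = y 0 * z 0 + y 1 * z 1 := by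
  simp [PiLp.inner_apply, Fin.sum_univ_two]; ring

lemma perp_apply0 (y : E2) : perp y 0 = -(y 1) := rfl
lemma perp_apply1 (y : E2) : perp y 1 = y 0 := rfl

lemma norm_sq_eq' (y : E2) : ‖y‖ ^ 2 = y 0 ^ 2 + y 1 ^ 2 := by
  rw [← real_inner_self_eq_norm_sq, inner_eq']; ring

theorem stmt14 (c₁ c₂ : E2) (r₁ r₂ : ℝ) (hr₁ : 0 < r₁) (hr₂ : 0 < r₂)
    (hdisj : Disjoint (closedBall c₁ r₁) (closedBall c₂ r₂))
    (p₁ p₂ : E2) (hp₁ : p₁ ∈ ball c₁ r₁) (hp₂ : p₂ ∈ ball c₂ r₂)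
    (hR₁ : refl2 c₁ r₁ p₂ = p₁) (hR₂ : refl2 c₂ r₂ p₁ = p₂) :
    ∀ x : E2, ‖x - c₁‖ = r₁ →
      (inner ℝ ((‖x - p₁‖ ^ 2)⁻¹ • perp (x - p₁) - (‖x - p₂‖ ^ 2)⁻¹ • perp (x - p₂)
        - (‖x - c₁‖ ^ 2)⁻¹ • perp (x - c₁)) (x - c₁) : ℝ) = 0 := by
  intro x hx
  -- p₂ is outside closedBall c₁ r₁
  have hp₂' : p₂ ∉ closedBall c₁ r₁ := fun h =>
    (Set.disjoint_left.mp hdisj h) (ball_subset_closedBall hp₂)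
  have hxmem : x ∈ closedBall c₁ r₁ := by
    rw [mem_closedBall, dist_eq_norm, hx]
  have hxp₂ : x ≠ p₂ := fun h => hp₂' (h ▸ hxmem)
  set a : E2 := p₂ - c₁ with ha_def
  have ha : a ≠ 0 := by
    intro h
    apply hp₂'
    have : p₂ = c₁ := by rwa [ha_def, sub_eq_zero] at h
    simp [this, hr₁.le]
  set s : ℝ := r₁ ^ 2 / ‖a‖ ^ 2 with hs_def
  have hna : ‖a‖ ^ 2 ≠ 0 := pow_ne_zero _ (norm_ne_zero_iff.mpr ha)
  have hs : s ≠ 0 := div_ne_zero (pow_ne_zero _ hr₁.ne') hna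
  have hsa2 : s * (a 0 ^ 2 + a 1 ^ 2) = r₁ ^ 2 := by
    rw [hs_def, ← norm_sq_eq']
    field_simp
  set u : E2 := x - c₁ with hu_def
  have hxp₁ : x - p₁ = u - s • a := by
    rw [← hR₁]; unfold refl2
    rw [hu_def, ha_def]
    abel
  have hxp₂' : x - p₂ = u - a := by rw [hu_def, ha_def]; abel
  have hu2 : u 0 ^ 2 + u 1 ^ 2 = r₁ ^ 2 := by rw [← norm_sq_eq', hu_def, hx]
  -- key norm identity
  have hkey : ‖u - s • a‖ ^ 2 = s * ‖u - a‖ ^ 2 := by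
    rw [norm_sq_eq', norm_sq_eq']
    simp only [PiLp.sub_apply, PiLp.smul_apply, smul_eq_mul]
    linear_combination (1 - s) * hu2 - (1 - s) * hsa2
  have hT : ‖u - a‖ ^ 2 ≠ 0 := by
    apply pow_ne_zero
    rw [norm_ne_zero_iff, sub_ne_zero]
    intro h
    apply hxp₂
    rw [hu_def, ha_def] at h
    exact sub_left_injective h
  rw [hxp₁, hxp₂', hx, hkey]
  rw [inner_eq']
  simp only [PiLp.sub_apply, PiLp.smul_apply, smul_eq_mul, perp_apply0, perp_apply1,
    norm_sq_eq']
  have hTc : (u - a) 0 ^ 2 + (u - a) 1 ^ 2 ≠ 0 := by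
    rw [← norm_sq_eq']; exact hT
  simp only [PiLp.sub_apply, PiLp.smul_apply, smul_eq_mul] at hTc ⊢
  field_simp
  ring
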